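/- arXiv:2309.02693 — 6 statements merged into one kernel-verified Lean document; each statement's English description precedes it below -/
import Mathlib

section
/- Let H be a subgroup of a finite group G and N a normal subgroup with N ≤ H. If H covers or avoids every pd-chief factor of G, then H/N covers or avoids every pd-chief factor of G/N. -/
/-- `A` covers the factor `K/L` if `K ≤ LA`. -/
def Covers {G : Type*} [Group G] (A K L : Subgroup G) : Prop := K ≤ L ⊔ A

/-- `A` avoids the factor `K/L` if `A ∩ K ≤ L`. -/
def Avoids {G : Type*} [Group G] (A K L : Subgroup G) : Prop := A ⊓ K ≤ L

/-- `K/L` is a chief factor of `G`: both are normal, `L < K`, and there is no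
normal subgroup of `G` strictly between `L` and `K`. -/
def IsChiefFactor {G : Type*} [Group G] (K L : Subgroup G) : Prop :=
  K.Normal ∧ L.Normal ∧ L < K ∧
    ∀ M : Subgroup G, M.Normal → L < M → M ≤ K → M = K

/-- `A` is a `p`-CAP-subgroup of `G`: it covers or avoids every `pd`-chief factor. -/
def IsPCAP {G : Type*} [Group G] (p : ℕ) (A : Subgroup G) : Prop :=
  ∀ K L : Subgroup G, IsChiefFactor K L → p ∣ Nat.card (K ⧸ L.subgroupOf K) →
    Covers A K L ∨ Avoids A K L

/-- `H` is an `ICPC`-subgroup of `G` (for the prime `p`). -/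
def IsICPC {G : Type*} [Group G] (p : ℕ) (H : Subgroup G) : Prop :=
  ∃ A : Subgroup G, A ≤ H ∧ IsPCAP p A ∧ H ⊓ ⁅H, (⊤ : Subgroup G)⁆ ≤ A

theorem stmt_3 {G : Type*} [Group G] [Finite G] (p : ℕ) (H N : Subgroup G)
    [N.Normal] (hNH : N ≤ H)
    (h : ∀ K L : Subgroup G, IsChiefFactor K L →
      p ∣ Nat.card (K ⧸ L.subgroupOf K) → Covers H K L ∨ Avoids H K L) :
    IsPCAP p (H.map (QuotientGroup.mk' N)) := by
  intro K' L' hcf hp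
  obtain ⟨hK'n, hL'n, hlt', hmax'⟩ := hcf
  set π := QuotientGroup.mk' N with hπdef
  have hπ : Function.Surjective π := QuotientGroup.mk'_surjective N
  set K := K'.comap π with hKdef
  set L := L'.comap π with hLdef
  have hKn : K.Normal := hK'n.comap π
  have hLn : L.Normal := hL'n.comap π
  have hmapK : K.map π = K' := Subgroup.map_comap_eq_self_of_surjective hπ K'
  have hmapL : L.map π = L' := Subgroup.map_comap_eq_self_of_surjective hπ L'
  have hNL : N ≤ L := by
    intro n hn
    have : π n = 1 := (QuotientGroup.eq_one_iff n).2 hn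
    have : (n : G) ∈ L'.comap π := by rw [Subgroup.mem_comap, this]; exact L'.one_mem
    exact this
  have hLK : L < K := lt_of_le_of_ne (Subgroup.comap_mono hlt'.le) (by
    intro heq
    exact hlt'.ne (by rw [← hmapL, ← hmapK, heq]))
  have hcfKL : IsChiefFactor K L := by
    refine ⟨hKn, hLn, hLK, ?_⟩
    intro M hMn hLM hMK
    have hNM : N ≤ M := hNL.trans hLM.le
    have hcm : (M.map π).comap π = M := by
      rw [Subgroup.comap_map_eq, QuotientGroup.ker_mk', sup_of_le_left hNM]
    have hMn' : (M.map π).Normal := Subgroup.Normal.map hMn π hπ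
    have h1 : L' < M.map π := by
      rw [← hmapL]
      constructor
      · exact Subgroup.map_mono hLM.le
      · intro hle
        have hle' : Subgroup.map π M ≤ Subgroup.map π L := hle
        have : M ≤ L := by
          rw [← hcm]; rw [hmapL] at hle'
          calc (Subgroup.map π M).comap π ≤ L'.comap π := Subgroup.comap_mono hle'
            _ = L := rfl
        exact hLM.ne (le_antisymm hLM.le this)
    have h2 : M.map π ≤ K' := hmapK ▸ Subgroup.map_mono hMK
    have := hmax' (M.map π) hMn' h1 h2
    rw [← hcm, this, ← hKdef]
  -- cardinality transfer
  have hmemK' : ∀ x : K, π (x : G) ∈ K' := fun x => x.2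
  set φ0 : K →* K' := MonoidHom.codRestrict (π.domRestrict K) K' hmemK' with hφ0
  set φ : K →* K' ⧸ L'.subgroupOf K' := (QuotientGroup.mk' (L'.subgroupOf K')).comp φ0 with hφ
  have hφsurj : Function.Surjective φ := by
    intro q
    obtain ⟨k', rfl⟩ := QuotientGroup.mk'_surjective _ q
    obtain ⟨g, hg⟩ := hπ (k' : G ⧸ N)
    have hgK : g ∈ K := by
      rw [hKdef, Subgroup.mem_comap, hg]; exact k'.2
    refine ⟨(⟨g, hgK⟩ : K), ?_⟩
    simp only [hφ, MonoidHom.comp_apply]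
    congr 1
    exact Subtype.ext hg
  have hker : φ.ker = L.subgroupOf K := by
    ext x
    simp only [hφ, MonoidHom.mem_ker, MonoidHom.comp_apply]
    rw [QuotientGroup.mk'_apply, QuotientGroup.eq_one_iff]
    change (φ0 x ∈ L'.subgroupOf K') ↔ _
    rw [Subgroup.mem_subgroupOf, Subgroup.mem_subgroupOf]
    rfl
  have hcard : Nat.card (K ⧸ L.subgroupOf K) = Nat.card (K' ⧸ L'.subgroupOf K') := by
    rw [← hker]
    exact Nat.card_congr (QuotientGroup.quotientKerEquivOfSurjective φ hφsurj).toEquiv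
  rcases h K L hcfKL (hcard ▸ hp) with hc | ha
  · left
    have : K.map π ≤ (L ⊔ H).map π := Subgroup.map_mono hc
    rw [hmapK, Subgroup.map_sup, hmapL] at this
    exact this
  · right
    rintro x ⟨⟨g, hgH, rfl⟩, hxK'⟩
    have hgK : g ∈ K := hxK'
    have hgL : g ∈ L := ha ⟨hgH, hgK⟩
    exact hgL
end

section
/- Let H be a subgroup of a finite group G and N a normal subgroup of G with gcd(|H|,|N|) = 1. If H covers or avoids every pd-chief factor of G, then HN/N covers or avoids every pd-chief factor of G/N. -/
theorem stmt_4 {G : Type*} [Group G] [Finite G] (p : ℕ) (H N : Subgroup G)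
    [N.Normal] (hcop : Nat.Coprime (Nat.card H) (Nat.card N))
    (h : IsPCAP p H) :
    IsPCAP p (H.map (QuotientGroup.mk' N)) := by
  intro K L hCF hp
  set f := QuotientGroup.mk' N with hfdef
  have hf : Function.Surjective f := QuotientGroup.mk'_surjective N
  have hker : f.ker = N := QuotientGroup.ker_mk' N
  obtain ⟨hKn, hLn, hLK, hmax⟩ := hCF
  set K' := K.comap f with hK'
  set L' := L.comap f with hL'
  have hNL : N ≤ L' := by
    intro x hx
    have : f x = 1 := (QuotientGroup.eq_one_iff x).mpr hx
    show f x ∈ L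
    rw [this]; exact L.one_mem
  have hNK : N ≤ K' := hNL.trans (Subgroup.comap_mono hLK.le)
  have hmapK : K'.map f = K := Subgroup.map_comap_eq_self_of_surjective hf K
  have hmapL : L'.map f = L := Subgroup.map_comap_eq_self_of_surjective hf L
  have hK'n : K'.Normal := hKn.comap f
  have hL'n : L'.Normal := hLn.comap f
  have hlt : L' < K' := by
    refine lt_of_le_of_ne (Subgroup.comap_mono hLK.le) ?_
    intro heq
    exact hLK.ne (by rw [← hmapL, ← hmapK, heq])
  have hCF' : IsChiefFactor K' L' := by
    refine ⟨hK'n, hL'n, hlt, ?_⟩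
    intro M hMn hLM hMK
    have hNM : N ≤ M := hNL.trans hLM.le
    have hcm : (M.map f).comap f = M := by
      rw [Subgroup.comap_map_eq, hker, sup_of_le_left hNM]
    have hMmn : (M.map f).Normal := Subgroup.Normal.map hMn f hf
    have hLMm : L < M.map f := by
      refine lt_of_le_of_ne ?_ ?_
      · rw [← hmapL]; exact Subgroup.map_mono hLM.le
      · intro heq
        apply hLM.ne
        rw [hL', heq, hcm]
    have hMmK : M.map f ≤ K := by rw [← hmapK]; exact Subgroup.map_mono hMK
    have := hmax (M.map f) hMmn hLMm hMmK
    rw [← hcm, this, ← hK']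
  have hcard : Nat.card (K' ⧸ L'.subgroupOf K') = Nat.card (K ⧸ L.subgroupOf K) := by
    have h1 : Nat.card (K' ⧸ L'.subgroupOf K') = L'.relIndex K' := rfl
    have h2 : Nat.card (K ⧸ L.subgroupOf K) = L.relIndex K := rfl
    rw [h1, h2, hK', hL', Subgroup.relIndex_comap, hmapK]
  have hp' : p ∣ Nat.card (K' ⧸ L'.subgroupOf K') := by rw [hcard]; exact hp
  rcases h K' L' hCF' hp' with hc | ha
  · left
    unfold Covers at hc ⊢
    calc K = K'.map f := hmapK.symm
    _ ≤ (L' ⊔ H).map f := Subgroup.map_mono hc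
    _ = L ⊔ H.map f := by rw [Subgroup.map_sup, hmapL]
  · right
    rintro x ⟨⟨g, hgH, rfl⟩, hxK⟩
    have hgK : g ∈ K' := hxK
    exact ha ⟨hgH, hgK⟩
end

section
/- Let G be a finite group, H ≤ G, and N ⊴ G with gcd(|H|,|N|) = 1. Then HN ∩ [H,G] = (H ∩ [H,G])(N ∩ H[H,G]). -/
open Pointwise

open Subgroup commutatorElement in
lemma commutator_top_normal {G : Type*} [Group G] (H : Subgroup G) :
    (⁅H, (⊤ : Subgroup G)⁆ : Subgroup G).Normal := by
  constructor
  intro n hn g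
  rw [Subgroup.commutator_def] at hn ⊢
  induction hn using closure_induction with
  | mem x hx =>
    obtain ⟨h, hh, y, -, rfl⟩ := hx
    have key : g * ⁅h, y⁆ * g⁻¹ = ⁅h, g⁆⁻¹ * ⁅h, g * y⁆ := by
      simp only [commutatorElement_def]
      group
    rw [key]
    exact mul_mem (inv_mem (subset_closure ⟨h, hh, g, trivial, rfl⟩))
      (subset_closure ⟨h, hh, g * y, trivial, rfl⟩)
  | one => simpa using one_mem _
  | mul a b _ _ ha hb =>
    have : g * (a * b) * g⁻¹ = (g * a * g⁻¹) * (g * b * g⁻¹) := by group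
    rw [this]; exact mul_mem ha hb
  | inv a _ ha =>
    have : g * a⁻¹ * g⁻¹ = (g * a * g⁻¹)⁻¹ := by group
    rw [this]; exact inv_mem ha

theorem stmt_5 {G : Type*} [Group G] [Finite G] (H N : Subgroup G)
    [N.Normal] (hcop : Nat.Coprime (Nat.card H) (Nat.card N)) :
    ((H ⊔ N : Subgroup G) : Set G) ∩ ((⁅H, (⊤ : Subgroup G)⁆ : Subgroup G) : Set G) =
      ((H ⊓ ⁅H, (⊤ : Subgroup G)⁆ : Subgroup G) : Set G) *
        ((N ⊓ (H ⊔ ⁅H, (⊤ : Subgroup G)⁆) : Subgroup G) : Set G) := by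
  set K : Subgroup G := ⁅H, (⊤ : Subgroup G)⁆ with hK
  haveI : K.Normal := commutator_top_normal H
  -- key lemma : N ⊓ (H ⊔ K) ≤ K
  have key : N ⊓ (H ⊔ K) ≤ K := by
    intro x hx
    obtain ⟨hxN, hxHK⟩ := hx
    set π := QuotientGroup.mk' K with hπ
    have hHcard : Nat.card (H.map π) ∣ Nat.card H :=
      Subgroup.card_dvd_of_surjective (π.subgroupMap H) (π.subgroupMap_surjective H)
    have hNcard : Nat.card (N.map π) ∣ Nat.card N :=
      Subgroup.card_dvd_of_surjective (π.subgroupMap N) (π.subgroupMap_surjective N)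
    have hcop' : Nat.Coprime (Nat.card (H.map π)) (Nat.card (N.map π)) :=
      Nat.Coprime.coprime_dvd_right hNcard (Nat.Coprime.coprime_dvd_left hHcard hcop)
    have hbot : (H.map π) ⊓ (N.map π) = ⊥ := Subgroup.inf_eq_bot_of_coprime hcop'
    have hKmap : K.map π = ⊥ :=
      (Subgroup.map_eq_bot_iff K).mpr (QuotientGroup.ker_mk' K).ge
    have hxH : π x ∈ H.map π := by
      have : π x ∈ (H ⊔ K).map π := Subgroup.mem_map_of_mem π hxHK
      rwa [Subgroup.map_sup, hKmap, sup_bot_eq] at this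
    have hx1 : π x = 1 := by
      have : π x ∈ (H.map π) ⊓ (N.map π) := ⟨hxH, Subgroup.mem_map_of_mem π hxN⟩
      rwa [hbot, Subgroup.mem_bot] at this
    have : x ∈ (QuotientGroup.mk' K).ker := hx1
    rwa [QuotientGroup.ker_mk'] at this
  ext x
  constructor
  · rintro ⟨hxHN, hxK⟩
    rw [Subgroup.mul_normal H N] at hxHN
    obtain ⟨h, hh, n, hn, rfl⟩ := hxHN
    have hnmem : n ∈ N ⊓ (H ⊔ K) := by
      refine ⟨hn, ?_⟩
      have : n = h⁻¹ * (h * n) := by group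
      rw [this]
      exact mul_mem (Subgroup.mem_sup_left (inv_mem hh)) (Subgroup.mem_sup_right hxK)
    have hnK : n ∈ K := key hnmem
    have hhK : h ∈ K := by
      have : h = (h * n) * n⁻¹ := by group
      rw [this]; exact mul_mem hxK (inv_mem hnK)
    exact ⟨h, ⟨hh, hhK⟩, n, hnmem, rfl⟩
  · rintro ⟨a, ha, b, hb, rfl⟩
    have hbK : b ∈ K := key hb
    exact ⟨mul_mem (Subgroup.mem_sup_left ha.1) (Subgroup.mem_sup_right hb.1),
      mul_mem ha.2 hbK⟩
end

section
/- Let G be a finite group, N ⊴ G, and H ≤ G with gcd(|H|,|N|) = 1. If H is an ICPC-subgroup of G, then HN/N is an ICPC-subgroup of G/N. -/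
open Pointwise


open scoped commutatorElement in
/-- `[H, G]` is always a normal subgroup of `G`. -/
lemma comm_top_normal {G : Type*} [Group G] (H : Subgroup G) :
    Subgroup.Normal ⁅H, (⊤ : Subgroup G)⁆ := by
  constructor
  intro n hn g
  rw [Subgroup.commutator_def] at hn
  induction hn using Subgroup.closure_induction with
  | mem x hx =>
      obtain ⟨h, hh, y, -, rfl⟩ := hx
      have e : g * ⁅h, y⁆ * g⁻¹ = ⁅h, g⁆⁻¹ * ⁅h, g * y⁆ := by group
      rw [e]
      exact mul_mem (inv_mem (Subgroup.commutator_mem_commutator hh (Subgroup.mem_top g)))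
        (Subgroup.commutator_mem_commutator hh (Subgroup.mem_top _))
  | one => simpa using one_mem _
  | mul x y _ _ ihx ihy =>
      have e : g * (x * y) * g⁻¹ = (g * x * g⁻¹) * (g * y * g⁻¹) := by group
      rw [e]; exact mul_mem ihx ihy
  | inv x _ ihx =>
      have e : g * x⁻¹ * g⁻¹ = (g * x * g⁻¹)⁻¹ := by group
      rw [e]; exact inv_mem ihx

/-- Coprimality argument: if `|H|` and `|N|` are coprime, `D, N ⊴ G`, then
`H ∩ DN ≤ D`. -/
lemma coprime_inf_sup_le {G : Type*} [Group G] [Finite G] (H D N : Subgroup G)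
    (hD : D.Normal) [N.Normal] (hcop : Nat.Coprime (Nat.card H) (Nat.card N)) :
    H ⊓ (D ⊔ N) ≤ D := by
  haveI := hD
  intro h hh
  obtain ⟨hH, hDN⟩ := hh
  have hmem : (h : G) ∈ ((D : Set G) * (N : Set G)) := by
    have : h ∈ ((D ⊔ N : Subgroup G) : Set G) := hDN
    rwa [Subgroup.mul_normal] at this
  obtain ⟨d, hd, n, hn, rfl⟩ := hmem
  set π := QuotientGroup.mk' D with hπdef
  have hπd : π d = 1 := (QuotientGroup.eq_one_iff d).mpr hd
  have hπeq : π (d * n) = π n := by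
    rw [map_mul, hπd, one_mul]
  have h1 : orderOf (π (d * n)) ∣ Nat.card H := by
    exact (orderOf_map_dvd π (d * n)).trans (Subgroup.orderOf_dvd_natCard H hH)
  have h2 : orderOf (π (d * n)) ∣ Nat.card N := by
    rw [hπeq]
    exact (orderOf_map_dvd π n).trans (Subgroup.orderOf_dvd_natCard N hn)
  have : orderOf (π (d * n)) = 1 :=
    Nat.eq_one_of_dvd_one (hcop ▸ Nat.dvd_gcd h1 h2)
  have : π (d * n) = 1 := orderOf_eq_one_iff.mp this
  exact (QuotientGroup.eq_one_iff (d * n)).mp this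

theorem stmt_7 {G : Type*} [Group G] [Finite G] (p : ℕ) (H N : Subgroup G)
    [N.Normal] (hcop : Nat.Coprime (Nat.card H) (Nat.card N))
    (h : IsICPC p H) :
    IsICPC p (H.map (QuotientGroup.mk' N)) := by
  obtain ⟨A, hAH, hcap, hcomm⟩ := h
  set f := QuotientGroup.mk' N with hfdef
  have hfsurj : Function.Surjective f := QuotientGroup.mk'_surjective N
  have hker : f.ker = N := QuotientGroup.ker_mk' N
  refine ⟨A.map f, Subgroup.map_mono hAH, ?_, ?_⟩
  · -- `A.map f` is a p-CAP subgroup of `G ⧸ N`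
    intro K' L' hchief hp
    obtain ⟨hK'n, hL'n, hlt, hmax⟩ := hchief
    set K := K'.comap f with hKdef
    set L := L'.comap f with hLdef
    have hmapK : K.map f = K' := Subgroup.map_comap_eq_self_of_surjective hfsurj K'
    have hmapL : L.map f = L' := Subgroup.map_comap_eq_self_of_surjective hfsurj L'
    have hkerL : f.ker ≤ L := Subgroup.ker_le_comap f L'
    have hLK : L < K := by
      refine lt_of_le_of_ne (Subgroup.comap_mono hlt.le) ?_
      intro e
      exact hlt.ne (by rw [← hmapL, ← hmapK, e])
    have hchief' : IsChiefFactor K L := by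
      refine ⟨hK'n.comap f, hL'n.comap f, hLK, ?_⟩
      intro M hMn hLM hMK
      have hkerM : f.ker ≤ M := hkerL.trans hLM.le
      have hMeq : (M.map f).comap f = M := Subgroup.comap_map_eq_self hkerM
      have h1 : L' < M.map f := by
        refine lt_of_le_of_ne (by rw [← hmapL]; exact Subgroup.map_mono hLM.le) ?_
        intro e
        apply hLM.ne'
        rw [← hMeq, ← e, hLdef]
      have h2 : M.map f ≤ K' := by rw [← hmapK]; exact Subgroup.map_mono hMK
      have h3 := hmax (M.map f) (hMn.map f hfsurj) h1 h2
      rw [← hMeq, h3]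
    have hcard : Nat.card (K ⧸ L.subgroupOf K) = Nat.card (K' ⧸ L'.subgroupOf K') := by
      show L.relIndex K = L'.relIndex K'
      rw [hLdef, Subgroup.relIndex_comap, hmapK]
    rcases hcap K L hchief' (by rw [hcard]; exact hp) with hcov | havd
    · left
      calc K' = K.map f := hmapK.symm
        _ ≤ (L ⊔ A).map f := Subgroup.map_mono hcov
        _ = L' ⊔ A.map f := by rw [Subgroup.map_sup, hmapL]
    · right
      rintro x ⟨hxA, hxK⟩
      obtain ⟨a, ha, rfl⟩ := hxA
      have haK : a ∈ K := by rwa [hKdef, Subgroup.mem_comap]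
      have : a ∈ L := havd ⟨ha, haK⟩
      rwa [hLdef, Subgroup.mem_comap] at this
  · -- the commutator condition
    have hDnorm : Subgroup.Normal ⁅H, (⊤ : Subgroup G)⁆ := comm_top_normal H
    have hcommmap : ⁅H.map f, (⊤ : Subgroup (G ⧸ N))⁆ = (⁅H, (⊤ : Subgroup G)⁆).map f := by
      rw [Subgroup.map_commutator H ⊤ f, Subgroup.map_top_of_surjective f hfsurj]
    rintro x ⟨hx1, hx2⟩
    obtain ⟨h, hh, rfl⟩ := hx1
    rw [hcommmap] at hx2
    obtain ⟨d, hd, he⟩ := hx2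
    have hdn : d⁻¹ * h ∈ N := by
      rw [← hker]
      have : f (d⁻¹ * h) = 1 := by rw [map_mul, map_inv, he, inv_mul_cancel]
      exact this
    have hhDN : h ∈ H ⊓ (⁅H, (⊤ : Subgroup G)⁆ ⊔ N) := by
      refine ⟨hh, ?_⟩
      have : d * (d⁻¹ * h) ∈ ⁅H, (⊤ : Subgroup G)⁆ ⊔ N :=
        mul_mem (Subgroup.mem_sup_left hd) (Subgroup.mem_sup_right hdn)
      simpa using this
    have hhD : h ∈ ⁅H, (⊤ : Subgroup G)⁆ :=
      coprime_inf_sup_le H ⁅H, ⊤⁆ N hDnorm hcop hhDN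
    exact ⟨h, hcomm ⟨hh, hhD⟩, rfl⟩
end

section
/- Let M be a maximal subgroup of a finite group G and Q a normal p-subgroup of G such that G = MQ. Then Q ∩ M is normal in G. -/
theorem stmt_8 {G : Type*} [Group G] [Finite G] (p : ℕ) [Fact p.Prime]
    (M Q : Subgroup G) (hM : IsCoatom M) (hQ : Q.Normal) (hQp : IsPGroup p Q)
    (hG : M ⊔ Q = ⊤) :
    (Q ⊓ M).Normal := by
  by_cases hQM : Q ≤ M
  · rw [sup_of_le_left hQM] at hG
    exact absurd hG hM.1
  -- Q ⊓ M is a proper subgroup of Q; use normalizer condition in Q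
  have hnil : Group.IsNilpotent Q := hQp.isNilpotent
  have hnc : NormalizerCondition Q := normalizerCondition_of_isNilpotent
  set H : Subgroup G := Q ⊓ M with hH
  -- M normalizes H
  have hMN : M ≤ Subgroup.normalizer (H : Set G) := by
    intro m hm
    rw [Subgroup.mem_normalizer_iff]
    intro g
    constructor
    · rintro ⟨hgQ, hgM⟩
      exact ⟨hQ.conj_mem g hgQ m, M.mul_mem (M.mul_mem hm hgM) (M.inv_mem hm)⟩
    · rintro ⟨hgQ, hgM⟩
      have h1 : m⁻¹ * (m * g * m⁻¹) * m⁻¹⁻¹ ∈ Q := hQ.conj_mem _ hgQ m⁻¹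
      have h2 : m⁻¹ * (m * g * m⁻¹) * m⁻¹⁻¹ ∈ M :=
        M.mul_mem (M.mul_mem (M.inv_mem hm) hgM) (M.inv_mem (M.inv_mem hm))
      group at h1 h2
      exact ⟨h1, h2⟩
  -- H.subgroupOf Q is proper in Q
  have hHlt : H.subgroupOf Q < ⊤ := by
    rcases SetLike.exists_of_lt (lt_of_le_of_ne inf_le_left
      (fun h => hQM (h ▸ inf_le_right)) : H < Q) with ⟨x, hxQ, hxH⟩
    refine lt_of_le_of_ne le_top fun h => hxH ?_
    have : (⟨x, hxQ⟩ : Q) ∈ H.subgroupOf Q := h ▸ Subgroup.mem_top _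
    exact Subgroup.mem_inf.mpr ⟨hxQ, (this : x ∈ H).2⟩
  have hlt := hnc _ hHlt
  rcases SetLike.exists_of_lt hlt with ⟨x, hxN, hxH⟩
  -- x : Q normalizes H in G
  have hxnorm : (x : G) ∈ Subgroup.normalizer (H : Set G) := by
    rw [Subgroup.mem_normalizer_iff]
    intro g
    constructor
    · rintro ⟨hgQ, hgM⟩
      have hg' : (⟨g, hgQ⟩ : Q) ∈ H.subgroupOf Q := by
        rw [Subgroup.mem_subgroupOf]; exact ⟨hgQ, hgM⟩
      have := (Subgroup.mem_normalizer_iff.mp hxN ⟨g, hgQ⟩).mp hg'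
      rw [Subgroup.mem_subgroupOf] at this
      exact this
    · rintro ⟨hgQ, hgM⟩
      have hgQ' : g ∈ Q := by
        have : (x : G)⁻¹ * ((x : G) * g * (x : G)⁻¹) * x ∈ Q :=
          Q.mul_mem (Q.mul_mem (Q.inv_mem x.2) hgQ) x.2
        simpa [mul_assoc] using this
      have hg' : (⟨g, hgQ'⟩ : Q) ∈ H.subgroupOf Q := by
        refine (Subgroup.mem_normalizer_iff.mp hxN ⟨g, hgQ'⟩).mpr ?_
        rw [Subgroup.mem_subgroupOf]
        exact ⟨hgQ, hgM⟩
      rw [Subgroup.mem_subgroupOf] at hg'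
      exact hg'
  -- x ∉ M
  have hxM : (x : G) ∉ M := fun hm => hxH (by
    rw [Subgroup.mem_subgroupOf]; exact ⟨x.2, hm⟩)
  -- normalizer is strictly bigger than M, hence ⊤
  have : Subgroup.normalizer (H : Set G) = ⊤ := hM.2 _ (lt_of_le_of_ne hMN (fun h => hxM (h ▸ hxnorm)))
  exact Subgroup.normalizer_eq_top_iff.mp this
end

section
/- Let G be a finite group with a normal Sylow p-subgroup K_p such that K_p/Φ(K_p) is a chief factor of G, and let x ∈ K_p \ Φ(K_p). If [⟨x⟩,G] ≤ Φ(K_p), then K_p = ⟨x⟩, i.e., K_p is cyclic generated by x. -/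
theorem stmt_11 {G : Type*} [Group G] [Finite G] (p : ℕ) [Fact p.Prime]
    (Kp : Sylow p G) (hn : (Kp : Subgroup G).Normal)
    (hchief : IsChiefFactor (Kp : Subgroup G)
      ((frattini ↥(Kp : Subgroup G)).map (Kp : Subgroup G).subtype))
    (x : G) (hx : x ∈ (Kp : Subgroup G))
    (hx' : x ∉ (frattini ↥(Kp : Subgroup G)).map (Kp : Subgroup G).subtype)
    (h : ⁅Subgroup.zpowers x, (⊤ : Subgroup G)⁆ ≤
      (frattini ↥(Kp : Subgroup G)).map (Kp : Subgroup G).subtype) :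
    (Kp : Subgroup G) = Subgroup.zpowers x := by
  set Φ := (frattini ↥(Kp : Subgroup G)).map (Kp : Subgroup G).subtype with hΦdef
  obtain ⟨hKn, hΦn, hlt, hmin⟩ := hchief
  have hΦK : Φ ≤ (Kp : Subgroup G) := Subgroup.map_subtype_le _
  have hxK : Subgroup.zpowers x ≤ (Kp : Subgroup G) := Subgroup.zpowers_le.2 hx
  -- M = normal closure of x joined with Φ
  have hMn : (Subgroup.normalClosure {x} ⊔ Φ).Normal := Subgroup.sup_normal _ _
  have hMK : Subgroup.normalClosure {x} ⊔ Φ ≤ (Kp : Subgroup G) := by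
    refine sup_le ?_ hΦK
    exact Subgroup.normalClosure_le_normal (Set.singleton_subset_iff.mpr hx)
  have hΦM : Φ < Subgroup.normalClosure {x} ⊔ Φ := by
    refine lt_of_le_of_ne le_sup_right fun hEq => hx' ?_
    rw [hEq]
    exact Subgroup.mem_sup_left (Subgroup.subset_normalClosure rfl)
  have hMeq : Subgroup.normalClosure {x} ⊔ Φ = (Kp : Subgroup G) := hmin _ hMn hΦM hMK
  -- normalClosure {x} ≤ zpowers x ⊔ Φ
  have hnc : Subgroup.normalClosure {x} ≤ Subgroup.zpowers x ⊔ Φ := by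
    rw [Subgroup.normalClosure, Subgroup.closure_le]
    rintro c hc
    obtain ⟨a, ha, hconj⟩ := Group.mem_conjugatesOfSet_iff.mp hc
    rw [Set.mem_singleton_iff] at ha
    rw [ha] at hconj
    obtain ⟨g, hg⟩ := isConj_iff.mp hconj
    open scoped commutatorElement in
    have hcm : ⁅g, x⁆ ∈ Φ := by
      refine h ?_
      rw [← Subgroup.commutator_comm]
      exact Subgroup.commutator_mem_commutator (Subgroup.mem_top g)
        (Subgroup.mem_zpowers x)
    open scoped commutatorElement in
    have : c = ⁅g, x⁆ * x := by
      rw [commutatorElement_def, ← hg]; group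
    rw [this]
    exact mul_mem (Subgroup.mem_sup_right hcm) (Subgroup.mem_sup_left (Subgroup.mem_zpowers x))
  have hKsup : (Kp : Subgroup G) = Subgroup.zpowers x ⊔ Φ :=
    le_antisymm (hMeq ▸ sup_le hnc le_sup_right) (sup_le hxK hΦK)
  -- pull back into ↥Kp
  set x' : ↥(Kp : Subgroup G) := ⟨x, hx⟩ with hx'def
  have hmap : (Subgroup.zpowers x' ⊔ frattini ↥(Kp : Subgroup G)).map
      (Kp : Subgroup G).subtype = ((⊤ : Subgroup ↥(Kp : Subgroup G))).map
      (Kp : Subgroup G).subtype := by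
    rw [Subgroup.map_sup, MonoidHom.map_zpowers, ← MonoidHom.range_eq_map,
      Subgroup.range_subtype]
    exact (hKsup.symm : _)
  have hsupTop : Subgroup.zpowers x' ⊔ frattini ↥(Kp : Subgroup G) = ⊤ :=
    Subgroup.map_injective (Kp : Subgroup G).subtype_injective hmap
  have : Subgroup.zpowers x' = ⊤ := frattini_nongenerating hsupTop
  have : (Subgroup.zpowers x').map (Kp : Subgroup G).subtype =
      ((⊤ : Subgroup ↥(Kp : Subgroup G))).map (Kp : Subgroup G).subtype := by rw [this]
  rw [MonoidHom.map_zpowers, ← MonoidHom.range_eq_map, Subgroup.range_subtype] at this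
  exact this.symm
end
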